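/- For a multiplicative n-Hom Lie superalgebra N, the quasicentroid QC(N) is closed under the supercommutator [D,E] = DE − (−1)^{|D||E|}ED (i.e. is a Lie superalgebra) if and only if QC(N) is closed under composition (i.e. DE ∈ QC(N) for all homogeneous D, E ∈ QC(N)). -/

import Mathlib

open scoped BigOperators

noncomputable section

variable {𝔽 : Type*} [Field 𝔽]
variable {N : Type*} [AddCommGroup N] [Module 𝔽 N]

/-- The sign `(-1)^g` for `g : ZMod 2`. -/
def sgn (𝔽 : Type*) [Field 𝔽] (g : ZMod 2) : 𝔽 := if g = 0 then 1 else -1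

/-- `|X_{i-1}|` : the sum of the degrees `d j` for `j < i`. -/
def psum {m : ℕ} (d : Fin m → ZMod 2) (i : Fin m) : ZMod 2 :=
  ∑ j ∈ Finset.univ.filter (fun j => j < i), d j

/-- `D` is homogeneous of degree `ξ` with respect to the `ℤ₂`-grading `gr`. -/
def Homog (gr : ZMod 2 → Submodule 𝔽 N) (ξ : ZMod 2) (D : N →ₗ[𝔽] N) : Prop :=
  ∀ g : ZMod 2, ∀ x ∈ gr g, D x ∈ gr (g + ξ)

/-- `(N, br, α)` is a multiplicative `n`-Hom Lie superalgebra, where `n = m + 1`: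
`N = N₀ ⊕ N₁` is `ℤ₂`-graded, the `n`-multilinear bracket `br` is even (adds degrees),
super skew-symmetric in adjacent arguments, `α` is even, multiplicative, and the super
Hom-Jacobi identity holds. -/
structure IsMNHLS {m : ℕ} (gr : ZMod 2 → Submodule 𝔽 N)
    (br : MultilinearMap 𝔽 (fun _ : Fin (m + 1) => N) N) (α : N →ₗ[𝔽] N) : Prop where
  internal : DirectSum.IsInternal gr
  alpha_even : ∀ g : ZMod 2, ∀ x ∈ gr g, α x ∈ gr g
  br_deg : ∀ (d : Fin (m + 1) → ZMod 2) (x : Fin (m + 1) → N),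
      (∀ i, x i ∈ gr (d i)) → br x ∈ gr (∑ i, d i)
  skew : ∀ (d : Fin (m + 1) → ZMod 2) (x : Fin (m + 1) → N),
      (∀ i, x i ∈ gr (d i)) → ∀ i j : Fin (m + 1), (i : ℕ) + 1 = (j : ℕ) →
      br x = -sgn 𝔽 (d i * d j) • br (x ∘ Equiv.swap i j)
  alpha_br : ∀ x : Fin (m + 1) → N, α (br x) = br fun i => α (x i)
  jacobi : ∀ (dx : Fin m → ZMod 2) (x : Fin m → N)
      (dy : Fin (m + 1) → ZMod 2) (y : Fin (m + 1) → N),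
      (∀ i, x i ∈ gr (dx i)) → (∀ i, y i ∈ gr (dy i)) →
      br (Fin.snoc (fun i => α (x i)) (br y)) =
        ∑ i : Fin (m + 1), sgn 𝔽 ((∑ j, dx j) * psum dy i) •
          br (Function.update (fun j => α (y j)) i (br (Fin.snoc x (y i))))

/-- `D` is a homogeneous `α^k`-derivation of degree `ξ`. -/
def IsDer {m : ℕ} (gr : ZMod 2 → Submodule 𝔽 N)
    (br : MultilinearMap 𝔽 (fun _ : Fin (m + 1) => N) N) (α : N →ₗ[𝔽] N)
    (k : ℕ) (ξ : ZMod 2) (D : N →ₗ[𝔽] N) : Prop :=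
  Homog gr ξ D ∧ D ∘ₗ α = α ∘ₗ D ∧
    ∀ (d : Fin (m + 1) → ZMod 2) (x : Fin (m + 1) → N), (∀ i, x i ∈ gr (d i)) →
      D (br x) = ∑ i : Fin (m + 1), sgn 𝔽 (ξ * psum d i) •
        br (Function.update (fun j => (α ^ k) (x j)) i (D (x i)))

/-- `D` is a homogeneous `α^k`-quasiderivation of degree `ξ` with associated map `D'`. -/
def IsQDerWith {m : ℕ} (gr : ZMod 2 → Submodule 𝔽 N)
    (br : MultilinearMap 𝔽 (fun _ : Fin (m + 1) => N) N) (α : N →ₗ[𝔽] N)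
    (k : ℕ) (ξ : ZMod 2) (D D' : N →ₗ[𝔽] N) : Prop :=
  Homog gr ξ D ∧ D ∘ₗ α = α ∘ₗ D ∧ Homog gr ξ D' ∧ D' ∘ₗ α = α ∘ₗ D' ∧
    ∀ (d : Fin (m + 1) → ZMod 2) (x : Fin (m + 1) → N), (∀ i, x i ∈ gr (d i)) →
      (∑ i : Fin (m + 1), sgn 𝔽 (ξ * psum d i) •
        br (Function.update (fun j => (α ^ k) (x j)) i (D (x i)))) = D' (br x)

/-- `D` is a homogeneous `α^k`-quasiderivation of degree `ξ`. -/
def IsQDer {m : ℕ} (gr : ZMod 2 → Submodule 𝔽 N)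
    (br : MultilinearMap 𝔽 (fun _ : Fin (m + 1) => N) N) (α : N →ₗ[𝔽] N)
    (k : ℕ) (ξ : ZMod 2) (D : N →ₗ[𝔽] N) : Prop :=
  ∃ D' : N →ₗ[𝔽] N, IsQDerWith gr br α k ξ D D'

/-- `D` is a homogeneous generalized `α^k`-derivation of degree `ξ`:
there are `D⁽¹⁾, …, D⁽ⁿ⁾` (here `DD i` for positions `i = 1, …, n-1`, with `DD 0 = D`,
and `Dn = D⁽ⁿ⁾`) all homogeneous of degree `ξ` and commuting with `α`, satisfying the
defining identity. -/
def IsGDer {m : ℕ} (gr : ZMod 2 → Submodule 𝔽 N)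
    (br : MultilinearMap 𝔽 (fun _ : Fin (m + 1) => N) N) (α : N →ₗ[𝔽] N)
    (k : ℕ) (ξ : ZMod 2) (D : N →ₗ[𝔽] N) : Prop :=
  Homog gr ξ D ∧ D ∘ₗ α = α ∘ₗ D ∧
    ∃ (DD : Fin (m + 1) → (N →ₗ[𝔽] N)) (Dn : N →ₗ[𝔽] N),
      DD 0 = D ∧ (∀ i, Homog gr ξ (DD i)) ∧ (∀ i, DD i ∘ₗ α = α ∘ₗ DD i) ∧
      Homog gr ξ Dn ∧ Dn ∘ₗ α = α ∘ₗ Dn ∧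
      ∀ (d : Fin (m + 1) → ZMod 2) (x : Fin (m + 1) → N), (∀ i, x i ∈ gr (d i)) →
        (∑ i : Fin (m + 1), sgn 𝔽 (ξ * psum d i) •
          br (Function.update (fun j => (α ^ k) (x j)) i (DD i (x i)))) = Dn (br x)

/-- `D` is a homogeneous `α^k`-centroid element of degree `ξ`. -/
def IsCent {m : ℕ} (gr : ZMod 2 → Submodule 𝔽 N)
    (br : MultilinearMap 𝔽 (fun _ : Fin (m + 1) => N) N) (α : N →ₗ[𝔽] N)
    (k : ℕ) (ξ : ZMod 2) (D : N →ₗ[𝔽] N) : Prop :=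
  Homog gr ξ D ∧ D ∘ₗ α = α ∘ₗ D ∧
    ∀ (d : Fin (m + 1) → ZMod 2) (x : Fin (m + 1) → N), (∀ i, x i ∈ gr (d i)) →
      (∀ i : Fin (m + 1),
        br (Function.update (fun j => (α ^ k) (x j)) 0 (D (x 0))) =
          sgn 𝔽 (ξ * psum d i) •
            br (Function.update (fun j => (α ^ k) (x j)) i (D (x i)))) ∧
      br (Function.update (fun j => (α ^ k) (x j)) 0 (D (x 0))) = D (br x)

/-- `D` is a homogeneous `α^k`-quasicentroid element of degree `ξ`. -/
def IsQCent {m : ℕ} (gr : ZMod 2 → Submodule 𝔽 N)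
    (br : MultilinearMap 𝔽 (fun _ : Fin (m + 1) => N) N) (α : N →ₗ[𝔽] N)
    (k : ℕ) (ξ : ZMod 2) (D : N →ₗ[𝔽] N) : Prop :=
  Homog gr ξ D ∧ D ∘ₗ α = α ∘ₗ D ∧
    ∀ (d : Fin (m + 1) → ZMod 2) (x : Fin (m + 1) → N), (∀ i, x i ∈ gr (d i)) →
      ∀ i : Fin (m + 1),
        br (Function.update (fun j => (α ^ k) (x j)) 0 (D (x 0))) =
          sgn 𝔽 (ξ * psum d i) •
            br (Function.update (fun j => (α ^ k) (x j)) i (D (x i)))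

/-- `D` is a homogeneous `α^k`-center derivation of degree `ξ`. -/
def IsZDer {m : ℕ} (gr : ZMod 2 → Submodule 𝔽 N)
    (br : MultilinearMap 𝔽 (fun _ : Fin (m + 1) => N) N) (α : N →ₗ[𝔽] N)
    (k : ℕ) (ξ : ZMod 2) (D : N →ₗ[𝔽] N) : Prop :=
  Homog gr ξ D ∧ D ∘ₗ α = α ∘ₗ D ∧
    ∀ (d : Fin (m + 1) → ZMod 2) (x : Fin (m + 1) → N), (∀ i, x i ∈ gr (d i)) →
      br (Function.update (fun j => (α ^ k) (x j)) 0 (D (x 0))) = 0 ∧ D (br x) = 0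

/-- The center `Z(N) = {x : [x, y₂, …, yₙ] = 0}`. -/
def center {m : ℕ} (br : MultilinearMap 𝔽 (fun _ : Fin (m + 1) => N) N) :
    Submodule 𝔽 N where
  carrier := {x | ∀ y : Fin (m + 1) → N, br (Function.update y 0 x) = 0}
  add_mem' := by
    intro a b ha hb y
    rw [MultilinearMap.map_update_add, ha y, hb y, add_zero]
  zero_mem' := by
    intro y
    exact br.map_update_zero y 0
  smul_mem' := by
    intro c a ha y
    rw [MultilinearMap.map_update_smul, ha y, smul_zero]

/-- The Jordan product `D • E = ½(DE + (-1)^{|D||E|} ED)` of operators of degrees `ξ, η`. -/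
def jprod (𝔽 : Type*) [Field 𝔽] {N : Type*} [AddCommGroup N] [Module 𝔽 N]
    (ξ η : ZMod 2) (D E : N →ₗ[𝔽] N) : N →ₗ[𝔽] N :=
  (2 : 𝔽)⁻¹ • (D ∘ₗ E + sgn 𝔽 (ξ * η) • (E ∘ₗ D))

/-- The Hom-associator of the Jordan product with respect to `α̃(u) = α ∘ u`, where
`x, y, z` have degrees `a, b, c`. -/
def jassoc (𝔽 : Type*) [Field 𝔽] {N : Type*} [AddCommGroup N] [Module 𝔽 N]
    (α : N →ₗ[𝔽] N) (a b c : ZMod 2) (x y z : N →ₗ[𝔽] N) : N →ₗ[𝔽] N :=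
  jprod 𝔽 (a + b) c (jprod 𝔽 a b x y) (α ∘ₗ z) -
    jprod 𝔽 a (b + c) (α ∘ₗ x) (jprod 𝔽 b c y z)

/-- The bracket subalgebra `[N, …, N]`, the span of all brackets. -/
def brSub {m : ℕ} (br : MultilinearMap 𝔽 (fun _ : Fin (m + 1) => N) N) :
    Submodule 𝔽 N :=
  Submodule.span 𝔽 (Set.range fun x : Fin (m + 1) → N => br x)

/-- The bracket of `Ň = Nt + Ntⁿ` (modelled as `N × N`, first coordinate the coefficient
of `t`, second the coefficient of `tⁿ`): `[x₁t, …, xₙt] = [x₁, …, xₙ]tⁿ` and every bracket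
involving a `tⁿ`-term vanishes. -/
def checkBr {m : ℕ} (br : MultilinearMap 𝔽 (fun _ : Fin (m + 1) => N) N) :
    MultilinearMap 𝔽 (fun _ : Fin (m + 1) => N × N) (N × N) :=
  (LinearMap.inr 𝔽 N N).compMultilinearMap
    (br.compLinearMap fun _ => LinearMap.fst 𝔽 N N)

/-- The grading of `Ň = Nt + Ntⁿ`. -/
def checkGr (gr : ZMod 2 → Submodule 𝔽 N) (g : ZMod 2) : Submodule 𝔽 (N × N) :=
  (gr g).prod (gr g)

/-- The map `φ(D) : Ň → Ň`, `φ(D)(at + utⁿ + btⁿ) = D(a)t + D'(b)tⁿ`, where `π` is the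
projection of `N` onto `[N, …, N]` along `U`. -/
def phiMap (D D' π : N →ₗ[𝔽] N) : N × N →ₗ[𝔽] N × N :=
  LinearMap.prodMap D (D' ∘ₗ π)


section AuxQC

variable {𝔽 : Type*} [Field 𝔽]
variable {N : Type*} [AddCommGroup N] [Module 𝔽 N]

lemma aux_sgn_one_one : ((1 : ZMod 2) + 1) = 0 := rfl

lemma aux_psum_zero {m : ℕ} (d : Fin (m + 1) → ZMod 2) : psum d 0 = 0 := by
  have h : Finset.univ.filter (fun j : Fin (m + 1) => j < 0) = ∅ := by
    apply Finset.filter_eq_empty_iff.mpr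
    intro j _
    exact Fin.not_lt_zero j
  rw [psum, h, Finset.sum_empty]

lemma aux_psum_update_self {m : ℕ} (d : Fin (m + 1) → ZMod 2) (i : Fin (m + 1)) (c : ZMod 2) :
    psum (Function.update d i c) i = psum d i := by
  unfold psum
  refine Finset.sum_congr rfl fun j hj => ?_
  rw [Finset.mem_filter] at hj
  rw [Function.update_of_ne (ne_of_lt hj.2)]

lemma aux_psum_update_zero {m : ℕ} (d : Fin (m + 1) → ZMod 2) {i : Fin (m + 1)} (hi : i ≠ 0)
    (c : ZMod 2) : psum (Function.update d 0 (d 0 + c)) i = psum d i + c := by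
  have h0 : (0 : Fin (m + 1)) ∈ Finset.univ.filter (fun j => j < i) := by
    simp [Fin.pos_of_ne_zero hi]
  unfold psum
  rw [Finset.sum_update_of_mem h0, ← Finset.add_sum_erase _ d h0, ← Finset.erase_eq]
  ring

lemma aux_pow_mem {gr : ZMod 2 → Submodule 𝔽 N} {α : N →ₗ[𝔽] N}
    (hα : ∀ g : ZMod 2, ∀ x ∈ gr g, α x ∈ gr g) (s : ℕ) :
    ∀ g : ZMod 2, ∀ x ∈ gr g, (α ^ s) x ∈ gr g := by
  induction s with
  | zero => intro g x hx; simpa using hx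
  | succ n ih =>
      intro g x hx
      rw [pow_succ, Module.End.mul_apply]
      exact ih g _ (hα g x hx)

lemma aux_comm_pow {D α : N →ₗ[𝔽] N} (h : D ∘ₗ α = α ∘ₗ D) (s : ℕ) :
    ∀ v : N, D ((α ^ s) v) = (α ^ s) (D v) := by
  induction s with
  | zero => intro v; simp
  | succ n ih =>
      intro v
      have h' := LinearMap.congr_fun h v
      simp only [LinearMap.comp_apply] at h'
      rw [pow_succ, Module.End.mul_apply, Module.End.mul_apply, ih, h']

lemma aux_pow_pow (α : N →ₗ[𝔽] N) (a b : ℕ) (v : N) :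
    (α ^ a) ((α ^ b) v) = (α ^ (a + b)) v := by
  rw [pow_add, Module.End.mul_apply]

lemma aux_qcent_add {m : ℕ} {gr : ZMod 2 → Submodule 𝔽 N}
    {br : MultilinearMap 𝔽 (fun _ : Fin (m + 1) => N) N} {α : N →ₗ[𝔽] N}
    {k : ℕ} {ξ : ZMod 2} {D₁ D₂ : N →ₗ[𝔽] N}
    (h₁ : IsQCent gr br α k ξ D₁) (h₂ : IsQCent gr br α k ξ D₂) :
    IsQCent gr br α k ξ (D₁ + D₂) := by
  refine ⟨?_, ?_, ?_⟩
  · intro g x hx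
    simpa using add_mem (h₁.1 g x hx) (h₂.1 g x hx)
  · rw [LinearMap.add_comp, LinearMap.comp_add, h₁.2.1, h₂.2.1]
  · intro d x hx i
    have e₁ := h₁.2.2 d x hx i
    have e₂ := h₂.2.2 d x hx i
    simp only [LinearMap.add_apply, MultilinearMap.map_update_add, smul_add]
    rw [e₁, e₂]

lemma aux_qcent_smul {m : ℕ} {gr : ZMod 2 → Submodule 𝔽 N}
    {br : MultilinearMap 𝔽 (fun _ : Fin (m + 1) => N) N} {α : N →ₗ[𝔽] N}
    {k : ℕ} {ξ : ZMod 2} {D : N →ₗ[𝔽] N} (c : 𝔽)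
    (h : IsQCent gr br α k ξ D) : IsQCent gr br α k ξ (c • D) := by
  refine ⟨?_, ?_, ?_⟩
  · intro g x hx
    simpa using Submodule.smul_mem _ c (h.1 g x hx)
  · rw [LinearMap.smul_comp, LinearMap.comp_smul, h.2.1]
  · intro d x hx i
    have e := h.2.2 d x hx i
    simp only [LinearMap.smul_apply, MultilinearMap.map_update_smul]
    rw [e, smul_comm]

lemma aux_qcent_sub {m : ℕ} {gr : ZMod 2 → Submodule 𝔽 N}
    {br : MultilinearMap 𝔽 (fun _ : Fin (m + 1) => N) N} {α : N →ₗ[𝔽] N}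
    {k : ℕ} {ξ : ZMod 2} {D₁ D₂ : N →ₗ[𝔽] N}
    (h₁ : IsQCent gr br α k ξ D₁) (h₂ : IsQCent gr br α k ξ D₂) :
    IsQCent gr br α k ξ (D₁ - D₂) := by
  have := aux_qcent_add h₁ (aux_qcent_smul (-1 : 𝔽) h₂)
  rwa [neg_one_smul, ← sub_eq_add_neg] at this

lemma aux_qcent_key {m : ℕ} {gr : ZMod 2 → Submodule 𝔽 N}
    {br : MultilinearMap 𝔽 (fun _ : Fin (m + 1) => N) N} {α : N →ₗ[𝔽] N}
    {k s : ℕ} {ξ η : ZMod 2} {D E : N →ₗ[𝔽] N}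
    (hα : ∀ g : ZMod 2, ∀ x ∈ gr g, α x ∈ gr g)
    (hD : IsQCent gr br α k ξ D) (hE : IsQCent gr br α s η E)
    (d : Fin (m + 1) → ZMod 2) (x : Fin (m + 1) → N) (hx : ∀ j, x j ∈ gr (d j))
    {i : Fin (m + 1)} (hi : i ≠ 0) :
    br (Function.update (fun j => (α ^ (k + s)) (x j)) 0 (D (E (x 0)))) =
      (sgn 𝔽 (ξ * (psum d i + η)) * sgn 𝔽 (η * psum d i)) •
        br (Function.update (fun j => (α ^ (k + s)) (x j)) i (E (D (x i)))) := by
  set y : Fin (m + 1) → N := Function.update (fun j => (α ^ s) (x j)) 0 (E (x 0)) with hy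
  set dy : Fin (m + 1) → ZMod 2 := Function.update d 0 (d 0 + η) with hdy
  have hyg : ∀ j, y j ∈ gr (dy j) := by
    intro j
    rcases eq_or_ne j 0 with rfl | hj
    · simpa [hy, hdy] using hE.1 _ _ (hx 0)
    · simpa [hy, hdy, Function.update_of_ne hj] using aux_pow_mem hα s _ _ (hx j)
  have e1 := hD.2.2 dy y hyg i
  set z : Fin (m + 1) → N := Function.update (fun j => (α ^ k) (x j)) i (D (x i)) with hz
  set dz : Fin (m + 1) → ZMod 2 := Function.update d i (d i + ξ) with hdz
  have hzg : ∀ j, z j ∈ gr (dz j) := by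
    intro j
    rcases eq_or_ne j i with rfl | hj
    · simpa [hz, hdz] using hD.1 _ _ (hx j)
    · simpa [hz, hdz, Function.update_of_ne hj] using aux_pow_mem hα k _ _ (hx j)
  have e2 := hE.2.2 dz z hzg i
  have f1 : Function.update (fun j => (α ^ k) (y j)) 0 (D (y 0)) =
      Function.update (fun j => (α ^ (k + s)) (x j)) 0 (D (E (x 0))) := by
    funext j
    rcases eq_or_ne j 0 with rfl | hj
    · simp [hy]
    · simp [hy, Function.update_of_ne hj, aux_pow_pow]
  have f2 : Function.update (fun j => (α ^ k) (y j)) i (D (y i)) =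
      Function.update (fun j => (α ^ s) (z j)) 0 (E (z 0)) := by
    funext j
    rcases eq_or_ne j i with rfl | hj
    · simp only [hy, hz, Function.update_self, Function.update_of_ne hi]
      exact aux_comm_pow hD.2.1 s (x j)
    · rcases eq_or_ne j 0 with rfl | hj0
      · simp only [hy, hz, Function.update_self, Function.update_of_ne hj]
        exact (aux_comm_pow hE.2.1 k (x 0)).symm
      · simp only [hy, hz, Function.update_of_ne hj, Function.update_of_ne hj0]
        rw [aux_pow_pow, aux_pow_pow, Nat.add_comm s k]
  have f3 : Function.update (fun j => (α ^ s) (z j)) i (E (z i)) =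
      Function.update (fun j => (α ^ (k + s)) (x j)) i (E (D (x i))) := by
    funext j
    rcases eq_or_ne j i with rfl | hj
    · simp [hz]
    · simp only [hz, Function.update_of_ne hj]
      rw [aux_pow_pow, Nat.add_comm s k]
  have p1 : psum dy i = psum d i + η := aux_psum_update_zero d hi η
  have p2 : psum dz i = psum d i := aux_psum_update_self d i (d i + ξ)
  rw [f1, f2, p1] at e1
  rw [f3, p2] at e2
  rw [e1, e2, smul_smul]

lemma aux_sgn_calc1 (𝔽 : Type*) [Field 𝔽] (ξ η P : ZMod 2) :
    sgn 𝔽 (ξ * (P + η)) * sgn 𝔽 (η * P) = sgn 𝔽 ((ξ + η) * P) * sgn 𝔽 (ξ * η) := by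
  fin_cases ξ <;> fin_cases η <;> fin_cases P <;>
    simp +decide [sgn, aux_sgn_one_one] <;> ring

lemma aux_sgn_calc2 (𝔽 : Type*) [Field 𝔽] (ξ η P : ZMod 2) :
    sgn 𝔽 (ξ * η) * (sgn 𝔽 (η * (P + ξ)) * sgn 𝔽 (ξ * P)) = sgn 𝔽 ((ξ + η) * P) := by
  fin_cases ξ <;> fin_cases η <;> fin_cases P <;>
    simp +decide [sgn, aux_sgn_one_one] <;> ring

lemma aux_qcent_jordan {m : ℕ} {gr : ZMod 2 → Submodule 𝔽 N}
    {br : MultilinearMap 𝔽 (fun _ : Fin (m + 1) => N) N} {α : N →ₗ[𝔽] N}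
    {k s : ℕ} {ξ η : ZMod 2} {D E : N →ₗ[𝔽] N}
    (hα : ∀ g : ZMod 2, ∀ x ∈ gr g, α x ∈ gr g)
    (hD : IsQCent gr br α k ξ D) (hE : IsQCent gr br α s η E) :
    IsQCent gr br α (k + s) (ξ + η) (D ∘ₗ E + sgn 𝔽 (ξ * η) • (E ∘ₗ D)) := by
  refine ⟨?_, ?_, ?_⟩
  · intro g v hv
    simp only [LinearMap.add_apply, LinearMap.smul_apply, LinearMap.comp_apply]
    apply add_mem
    · have h1 := hD.1 _ _ (hE.1 g v hv)
      rwa [show g + η + ξ = g + (ξ + η) by ring] at h1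
    · apply Submodule.smul_mem
      have h1 := hE.1 _ _ (hD.1 g v hv)
      rwa [show g + ξ + η = g + (ξ + η) by ring] at h1
  · have cD : ∀ v, D (α v) = α (D v) := fun v => LinearMap.congr_fun hD.2.1 v
    have cE : ∀ v, E (α v) = α (E v) := fun v => LinearMap.congr_fun hE.2.1 v
    ext v
    simp only [LinearMap.comp_apply, LinearMap.add_apply, LinearMap.smul_apply,
      LinearMap.comp_apply] at cD cE ⊢
    rw [cE, cD, cD, cE, map_add, map_smul]
  · intro d x hx i
    rcases eq_or_ne i 0 with rfl | hi
    · rw [aux_psum_zero, mul_zero]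
      simp [sgn]
    · have e1 := aux_qcent_key hα hD hE d x hx hi
      have e2 := aux_qcent_key hα hE hD d x hx hi
      rw [Nat.add_comm s k] at e2
      simp only [LinearMap.add_apply, LinearMap.smul_apply, LinearMap.comp_apply,
        MultilinearMap.map_update_add, MultilinearMap.map_update_smul, smul_add]
      rw [e1, e2, smul_smul, smul_smul,
        aux_sgn_calc1 𝔽 ξ η (psum d i), aux_sgn_calc2 𝔽 ξ η (psum d i)]
      exact add_comm _ _

end AuxQC

/-- Proposition 3.9(1): `QC(N)` is closed under the supercommutator
`[D, E] = DE - (-1)^{|D||E|} ED` (i.e. is a Lie superalgebra) if and only if `QC(N)` is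
closed under composition (i.e. is a Hom-associative superalgebra). -/
theorem qcent_lie_iff_assoc {𝔽 : Type*} [Field 𝔽] [CharZero 𝔽]
    {N : Type*} [AddCommGroup N] [Module 𝔽 N] {m : ℕ} (hm : 1 ≤ m)
    (gr : ZMod 2 → Submodule 𝔽 N) (br : MultilinearMap 𝔽 (fun _ : Fin (m + 1) => N) N)
    (α : N →ₗ[𝔽] N) (H : IsMNHLS gr br α) :
    (∀ (k s : ℕ) (ξ η : ZMod 2) (D E : N →ₗ[𝔽] N),
      IsQCent gr br α k ξ D → IsQCent gr br α s η E →
        IsQCent gr br α (k + s) (ξ + η) (D ∘ₗ E - sgn 𝔽 (ξ * η) • (E ∘ₗ D))) ↔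
    (∀ (k s : ℕ) (ξ η : ZMod 2) (D E : N →ₗ[𝔽] N),
      IsQCent gr br α k ξ D → IsQCent gr br α s η E →
        IsQCent gr br α (k + s) (ξ + η) (D ∘ₗ E)) := by
  constructor
  · intro h k s ξ η D E hD hE
    have hL := h k s ξ η D E hD hE
    have hJ := aux_qcent_jordan H.alpha_even hD hE
    have hfin := aux_qcent_smul ((2 : 𝔽)⁻¹) (aux_qcent_add hL hJ)
    have heq : ((2 : 𝔽)⁻¹) • ((D ∘ₗ E - sgn 𝔽 (ξ * η) • (E ∘ₗ D)) +
        (D ∘ₗ E + sgn 𝔽 (ξ * η) • (E ∘ₗ D))) = D ∘ₗ E := by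
      rw [sub_add_add_cancel, ← two_smul 𝔽, smul_smul, inv_mul_cancel₀ (two_ne_zero),
        one_smul]
    rwa [heq] at hfin
  · intro h k s ξ η D E hD hE
    have h1 := h k s ξ η D E hD hE
    have h2 := h s k η ξ E D hE hD
    rw [Nat.add_comm s k, add_comm η ξ] at h2
    exact aux_qcent_sub h1 (aux_qcent_smul _ h2)
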